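/- In the NP-hardness reduction: the set X := V ∪ W ∪ {V[⊥,⊥,⊥]} is a minimum vertex cover of the constructed graph G', because G' contains a matching of size |X|, namely the pendant edges at the vertices of W ∪ {V[⊥,⊥,⊥]} together with, for each i ∈ [q], the three matching edges {V[i,⊥,z] U[i,1,z] : z ∈ {1,2,3}}. -/

import Mathlib

open SimpleGraph

/-- A set of vertices is a vertex cover if it meets every edge. -/
def IsVertexCover {V : Type*} (G : SimpleGraph V) (C : Set V) : Prop :=
  ∀ ⦃u v : V⦄, G.Adj u v → u ∈ C ∨ v ∈ C

/-- The minimum vertex cover number of a graph. -/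
noncomputable def vc {V : Type*} (G : SimpleGraph V) : ℕ :=
  sInf {n | ∃ C : Set V, _root_.IsVertexCover G C ∧ C.Finite ∧ Nat.card C = n}

/-- `X` is a minimum vertex cover of `G`. -/
def IsMinVertexCover {V : Type*} (G : SimpleGraph V) (X : Set V) : Prop :=
  _root_.IsVertexCover G X ∧ ∀ C : Set V, _root_.IsVertexCover G C → Nat.card X ≤ Nat.card C

/-- The rank of a graph: number of vertices minus number of connected components. -/
noncomputable def grank {V : Type*} (G : SimpleGraph V) : ℕ :=
  Nat.card V - Nat.card G.ConnectedComponent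

/-- The rank of a set of vertices: the rank of the induced subgraph. -/
noncomputable def srank {V : Type*} (G : SimpleGraph V) (S : Set V) : ℕ :=
  grank (G.induce S)

/-- The set of endpoints of a set of edges. -/
def edgeVerts {V : Type*} (F : Set (Sym2 V)) : Set V := {v | ∃ e ∈ F, v ∈ e}

/-- The setoid identifying the vertices connected through edges of `F`. -/
def contractSetoid {V : Type*} (F : Set (Sym2 V)) : Setoid V :=
  (SimpleGraph.fromEdgeSet F).reachableSetoid

/-- The graph obtained from `G` by contracting all the edges in `F`. -/
def contract {V : Type*} (G : SimpleGraph V) (F : Set (Sym2 V)) :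
    SimpleGraph (Quotient (contractSetoid F)) where
  Adj a b := a ≠ b ∧ ∃ u v : V, Quotient.mk (contractSetoid F) u = a ∧
    Quotient.mk (contractSetoid F) v = b ∧ G.Adj u v
  symm := by
    refine ⟨?_⟩
    rintro a b ⟨hab, u, v, hu, hv, h⟩
    exact ⟨hab.symm, v, u, hv, hu, h.symm⟩
  loopless := by refine ⟨?_⟩; rintro a ⟨h, -⟩; exact h rfl


/-- Vertex type of the graph `G'` of the NP-hardness reduction:
`V`-vertices, `W`-vertices, their pendant `P`-vertices, `U`-vertices,
the hub `V[⊥,⊥,⊥]` and its pendant `P[⊥,⊥,⊥]`. -/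
abbrev VT (q l : ℕ) : Type :=
  (Fin q × Fin 3) ⊕ ((Fin q × Fin l) ⊕ ((Fin q × Fin l) ⊕
    ((Fin q × Fin l × Fin 3) ⊕ (Unit ⊕ Unit))))

/-- The graph `G'` of the NP-hardness reduction. -/
def Gnp {q l : ℕ} (G : SimpleGraph (Fin q × Fin 3)) : SimpleGraph (VT q l) :=
  SimpleGraph.fromRel (fun a b =>
    match a, b with
    | .inl a, .inl b => G.Adj a b                                    -- edges of G
    | .inr (.inl w), .inr (.inr (.inl p)) => w = p                   -- W[i,j] – P[i,j]
    | .inr (.inl w), .inr (.inr (.inr (.inl u))) =>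
        w.1 = u.1 ∧ w.2 = u.2.1                                      -- W[i,j] – U[i,j,z]
    | .inl a, .inr (.inr (.inr (.inl u))) =>
        a.1 = u.1 ∧ a.2 = u.2.2                                      -- V[i,z] – U[i,j,z]
    | .inr (.inr (.inr (.inr (.inl _)))), .inl _ => True             -- hub – V
    | .inr (.inr (.inr (.inr (.inl _)))), .inr (.inr (.inr (.inl _))) => True -- hub – U
    | .inr (.inr (.inr (.inr (.inl _)))), .inr (.inr (.inr (.inr (.inr _)))) => True -- hub – P[⊥]
    | _, _ => False)

/-- The set `X = V ∪ W ∪ {V[⊥,⊥,⊥]}`. -/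
def Xset (q l : ℕ) : Set (VT q l) :=
  {w | match w with
    | .inl _ => True
    | .inr (.inl _) => True
    | .inr (.inr (.inr (.inr (.inl _)))) => True
    | _ => False}

namespace Stmt17Aux

lemma matching_le_cover {V : Type*} [Finite V] {G : SimpleGraph V} {M : G.Subgraph}
    (hM : M.IsMatching) {C : Set V} (hC : _root_.IsVertexCover G C) :
    Nat.card M.edgeSet ≤ Nat.card C := by
  have key : ∀ e ∈ M.edgeSet, ∃ v, v ∈ C ∧ v ∈ e := by
    intro e he
    induction e using Sym2.ind with
    | _ u v =>
      rw [Subgraph.mem_edgeSet] at he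
      rcases hC (M.adj_sub he) with h | h
      · exact ⟨u, h, Sym2.mem_mk_left u v⟩
      · exact ⟨v, h, Sym2.mem_mk_right u v⟩
  have uniq : ∀ (v : V) (e₁ e₂ : Sym2 V), e₁ ∈ M.edgeSet → e₂ ∈ M.edgeSet →
      v ∈ e₁ → v ∈ e₂ → e₁ = e₂ := by
    intro v e₁ e₂ h1 h2 hv1 hv2
    have part : ∀ e ∈ M.edgeSet, v ∈ e → ∃ w, e = s(v, w) ∧ M.Adj v w := by
      intro e he hve
      induction e using Sym2.ind with
      | _ a b =>
        rw [Subgraph.mem_edgeSet] at he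
        rcases Sym2.mem_iff.mp hve with rfl | rfl
        · exact ⟨b, rfl, he⟩
        · exact ⟨a, Sym2.eq_swap, he.symm⟩
    obtain ⟨w₁, rfl, ha1⟩ := part e₁ h1 hv1
    obtain ⟨w₂, rfl, ha2⟩ := part e₂ h2 hv2
    obtain ⟨w, -, hw⟩ := hM (M.edge_vert ha1)
    rw [hw w₁ ha1, hw w₂ ha2]
  classical
  have hch : ∀ e : M.edgeSet, ∃ v : C, (v : V) ∈ (e : Sym2 V) := by
    rintro ⟨e, he⟩
    obtain ⟨v, hv, hve⟩ := key e he
    exact ⟨⟨v, hv⟩, hve⟩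
  choose f hf using hch
  have hinj : Function.Injective f := by
    rintro e₁ e₂ hfe
    have h1 := hf e₁
    have h2 := hf e₂
    rw [hfe] at h1
    exact Subtype.ext (uniq (f e₂) e₁ e₂ e₁.2 e₂.2 h1 h2)
  exact Nat.card_le_card_of_injective f hinj

abbrev TT (q l : ℕ) := (Fin q × Fin 3) ⊕ ((Fin q × Fin l) ⊕ Unit)

def fX {q l : ℕ} : TT q l → VT q l
  | .inl a => .inl a
  | .inr (.inl w) => .inr (.inl w)
  | .inr (.inr _) => .inr (.inr (.inr (.inr (.inl ()))))

lemma fX_inj {q l : ℕ} : Function.Injective (fX (q := q) (l := l)) := by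
  rintro (a | w | u) (a' | w' | u') h <;> simp_all [fX]

lemma range_fX {q l : ℕ} : Set.range (fX (q := q) (l := l)) = Xset q l := by
  ext w
  constructor
  · rintro ⟨t, rfl⟩
    rcases t with a | w | u <;> simp [fX, Xset]
  · rintro hw
    rcases w with a | w | p | u | h | h
    · exact ⟨.inl a, rfl⟩
    · exact ⟨.inr (.inl w), rfl⟩
    · exact absurd hw (by simp [Xset])
    · exact absurd hw (by simp [Xset])
    · exact ⟨.inr (.inr ()), rfl⟩
    · exact absurd hw (by simp [Xset])

def fE {q l : ℕ} (hl : 1 ≤ l) : TT q l → Sym2 (VT q l)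
  | .inl (i, z) => s(.inl (i, z), .inr (.inr (.inr (.inl (i, ⟨0, hl⟩, z)))))
  | .inr (.inl w) => s(.inr (.inl w), .inr (.inr (.inl w)))
  | .inr (.inr _) => s(.inr (.inr (.inr (.inr (.inl ())))), .inr (.inr (.inr (.inr (.inr ())))))

lemma fE_partner {q l : ℕ} (hl : 1 ≤ l) {u v v' : VT q l} {t t' : TT q l}
    (h : s(u, v) = fE hl t) (h' : s(u, v') = fE hl t') : t = t' ∧ v = v' := by
  rcases t with ⟨i, z⟩ | w | u1 <;> rcases t' with ⟨i', z'⟩ | w' | u1' <;>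
    simp only [fE, Sym2.eq_iff] at h h' <;> aesop

lemma fE_inj {q l : ℕ} (hl : 1 ≤ l) : Function.Injective (fE (q := q) (l := l) hl) := by
  intro t t' h
  rcases t with ⟨i, z⟩ | w | u1 <;> rcases t' with ⟨i', z'⟩ | w' | u1' <;>
    simp only [fE, Sym2.eq_iff] at h <;> aesop

def Msub {q l : ℕ} (hl : 1 ≤ l) (G : SimpleGraph (Fin q × Fin 3)) :
    (Gnp (l := l) G).Subgraph where
  verts := {v | ∃ w t, s(v, w) = fE hl t}
  Adj u v := ∃ t, s(u, v) = fE hl t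
  adj_sub := by
    rintro u v ⟨t, h⟩
    rcases t with ⟨i, z⟩ | w | u1 <;>
      simp only [fE, Sym2.eq_iff] at h <;>
      rcases h with ⟨rfl, rfl⟩ | ⟨rfl, rfl⟩ <;>
      simp [Gnp]
  edge_vert := by rintro u v ⟨t, h⟩; exact ⟨v, t, h⟩
  symm := by refine ⟨?_⟩; rintro u v ⟨t, h⟩; exact ⟨t, (Sym2.eq_swap).trans h⟩

lemma Msub_matching {q l : ℕ} (hl : 1 ≤ l) (G : SimpleGraph (Fin q × Fin 3)) :
    (Msub (l := l) hl G).IsMatching := by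
  rintro v ⟨w, t, h⟩
  refine ⟨w, ⟨t, h⟩, ?_⟩
  rintro w' ⟨t', h'⟩
  exact ((fE_partner hl h' h).2)

lemma Msub_edgeSet {q l : ℕ} (hl : 1 ≤ l) (G : SimpleGraph (Fin q × Fin 3)) :
    (Msub (l := l) hl G).edgeSet = Set.range (fE hl) := by
  ext e
  induction e using Sym2.ind with
  | _ u v =>
    simp only [Subgraph.mem_edgeSet, Set.mem_range, Msub]
    exact ⟨fun ⟨t, h⟩ => ⟨t, h.symm⟩, fun ⟨t, h⟩ => ⟨t, h.symm⟩⟩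

lemma Xcover {q l : ℕ} (G : SimpleGraph (Fin q × Fin 3)) :
    ∀ ⦃u v : VT q l⦄, (Gnp (l := l) G).Adj u v → u ∈ Xset q l ∨ v ∈ Xset q l := by
  intro u v h
  rw [Gnp, fromRel_adj] at h
  rcases u with a | w | p | x | hb | hp <;> rcases v with a' | w' | p' | x' | hb' | hp' <;>
    simp_all [Xset]

end Stmt17Aux

theorem stmt17 {q l : ℕ} (hl : 1 ≤ l) (G : SimpleGraph (Fin q × Fin 3)) :
    IsMinVertexCover (Gnp (l := l) G) (Xset q l) ∧
    ∃ M : (Gnp (l := l) G).Subgraph, M.IsMatching ∧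
      Nat.card M.edgeSet = Nat.card (Xset q l) := by
  have hM := Stmt17Aux.Msub_matching hl G
  have hcard : Nat.card (Stmt17Aux.Msub hl G).edgeSet = Nat.card (Xset q l) := by
    rw [Stmt17Aux.Msub_edgeSet, ← Stmt17Aux.range_fX,
      Nat.card_range_of_injective (Stmt17Aux.fE_inj hl),
      Nat.card_range_of_injective Stmt17Aux.fX_inj]
  refine ⟨⟨Stmt17Aux.Xcover G, ?_⟩, Stmt17Aux.Msub hl G, hM, hcard⟩
  intro C hC
  rw [← hcard]
  exact Stmt17Aux.matching_le_cover hM hC
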